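/- Let l, u be integers with l < u, and let x be uniformly distributed on [l, u). Then for any Δ in (0, 1/2), E[⌊x+Δ⌉] − E[⌊x−Δ⌉] − 2Δ = 0, where ⌊·⌉ denotes rounding to the nearest integer (⌊y⌉ = ⌊y + 1/2⌋). -/

import Mathlib

open MeasureTheory Set

lemma floor_integrableOn (c a b : ℝ) :
    IntegrableOn (fun x => (⌊x + c⌋ : ℝ)) (Ico a b) := by
  have hmono : Monotone (fun x : ℝ => (⌊x + c⌋ : ℝ)) := by
    intro x y h
    simp only
    exact_mod_cast Int.floor_le_floor (show x + c ≤ y + c by linarith)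
  exact ((hmono.monotoneOn _).integrableOn_isCompact isCompact_Icc).mono_set Ico_subset_Icc_self

lemma floor_int_unit (n : ℤ) (c : ℝ) (h0 : 0 < c) (h1 : c < 1) :
    ∫ x in Ico (n : ℝ) (n + 1), (⌊x + c⌋ : ℝ) = n + c := by
  have hsplit : Ico (n : ℝ) (n + 1 - c) ∪ Ico (n + 1 - c) (n + 1) = Ico (n : ℝ) (n + 1) :=
    Ico_union_Ico_eq_Ico (by linarith) (by linarith)
  have e1 : ∀ x ∈ Ico (n : ℝ) (n + 1 - c), (⌊x + c⌋ : ℝ) = (n : ℝ) := by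
    intro x hx
    rcases hx with ⟨hx1, hx2⟩
    have : ⌊x + c⌋ = n := by
      rw [Int.floor_eq_iff]
      refine ⟨by linarith, by push_cast; linarith⟩
    rw [this]
  have e2 : ∀ x ∈ Ico (n + 1 - c) ((n : ℝ) + 1), (⌊x + c⌋ : ℝ) = (n : ℝ) + 1 := by
    intro x hx
    rcases hx with ⟨hx1, hx2⟩
    have : ⌊x + c⌋ = n + 1 := by
      rw [Int.floor_eq_iff]
      constructor <;> push_cast <;> linarith
    rw [this]; push_cast; ring
  rw [← hsplit, setIntegral_union (Ico_disjoint_Ico_same) measurableSet_Ico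
    ((floor_integrableOn c _ _)) ((floor_integrableOn c _ _)),
    setIntegral_congr_fun measurableSet_Ico e1, setIntegral_congr_fun measurableSet_Ico e2,
    setIntegral_const, setIntegral_const, Real.volume_real_Ico_of_le (by linarith),
    Real.volume_real_Ico_of_le (by linarith)]
  rw [smul_eq_mul, smul_eq_mul]
  ring

lemma floor_int_sum (l : ℤ) (c : ℝ) (h0 : 0 < c) (h1 : c < 1) :
    ∀ u : ℤ, l ≤ u →
    ∫ x in Ico (l : ℝ) u, (⌊x + c⌋ : ℝ)
      = ((u : ℝ) - l) * c + ((u : ℝ)^2 - u - (l : ℝ)^2 + l) / 2 := by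
  refine Int.le_induction ?_ ?_
  · simp
  · intro u hu ih
    have hlu : (l : ℝ) ≤ u := by exact_mod_cast hu
    have hsplit : Ico (l : ℝ) u ∪ Ico (u : ℝ) (u + 1) = Ico (l : ℝ) (u + 1) :=
      Ico_union_Ico_eq_Ico hlu (by linarith)
    push_cast
    rw [← hsplit, setIntegral_union (Ico_disjoint_Ico_same) measurableSet_Ico
      (floor_integrableOn c _ _) (floor_integrableOn c _ _), ih, floor_int_unit u c h0 h1]
    ring

/-- For `x ~ Unif[l,u)` with integers `l < u` and `Δ ∈ (0, 1/2)`,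
`E[⌊x+Δ⌉] − E[⌊x−Δ⌉] − 2Δ = 0`, where `⌊·⌉` is `round` (round to nearest). -/
theorem stmt0 (l u : ℤ) (hlu : l < u) (Δ : ℝ) (hΔ0 : 0 < Δ) (hΔ : Δ < 1/2) :
    ((u : ℝ) - l)⁻¹ * (∫ x in Ico (l : ℝ) u, (round (x + Δ) : ℝ))
      - ((u : ℝ) - l)⁻¹ * (∫ x in Ico (l : ℝ) u, (round (x - Δ) : ℝ))
      - 2 * Δ = 0 := by
  have h1 : (∫ x in Ico (l : ℝ) u, (round (x + Δ) : ℝ))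
      = ∫ x in Ico (l : ℝ) u, (⌊x + (Δ + 1/2)⌋ : ℝ) := by
    apply setIntegral_congr_fun measurableSet_Ico
    intro x _
    simp only [round_eq]
    congr 2
    ring
  have h2 : (∫ x in Ico (l : ℝ) u, (round (x - Δ) : ℝ))
      = ∫ x in Ico (l : ℝ) u, (⌊x + (1/2 - Δ)⌋ : ℝ) := by
    apply setIntegral_congr_fun measurableSet_Ico
    intro x _
    simp only [round_eq]
    congr 2
    ring
  rw [h1, h2, floor_int_sum l (Δ + 1/2) (by linarith) (by linarith) u hlu.le,
    floor_int_sum l (1/2 - Δ) (by linarith) (by linarith) u hlu.le]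
  have hne : (u : ℝ) - l ≠ 0 := by
    have : (l : ℝ) < u := by exact_mod_cast hlu
    linarith
  field_simp
  ring
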